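/- Support of Blackwell's measure (Theorem 3.1): supp(Q) equals the closure of L, where L = ⋃_{n≥1} L_n and L_n = { f_{i_1}∘f_{i_2}∘⋯∘f_{i_n}(p_j) : i_1,…,i_n ∈ {0,1}, j ∈ {0,1} }. -/

import Mathlib

open MeasureTheory

/-- `f_0(x) = ((1−ε)/ε)·(π_00 x + π_10)/(π_01 x + π_11)`. -/
noncomputable def f₀ (π00 π01 π10 π11 ε : ℝ) (x : ℝ) : ℝ :=
  ((1 - ε) / ε) * ((π00 * x + π10) / (π01 * x + π11))

/-- `f_1(x) = (ε/(1−ε))·(π_00 x + π_10)/(π_01 x + π_11)`. -/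
noncomputable def f₁ (π00 π01 π10 π11 ε : ℝ) (x : ℝ) : ℝ :=
  (ε / (1 - ε)) * ((π00 * x + π10) / (π01 * x + π11))

/-- `r_0(x) = (((1−ε)π_00 + επ_01)x + ((1−ε)π_10 + επ_11))/(x+1)`. -/
noncomputable def r₀ (π00 π01 π10 π11 ε : ℝ) (x : ℝ) : ℝ :=
  (((1 - ε) * π00 + ε * π01) * x + ((1 - ε) * π10 + ε * π11)) / (x + 1)

/-- `r_1(x) = ((επ_00 + (1−ε)π_01)x + (επ_10 + (1−ε)π_11))/(x+1)`. -/
noncomputable def r₁ (π00 π01 π10 π11 ε : ℝ) (x : ℝ) : ℝ :=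
  ((ε * π00 + (1 - ε) * π01) * x + (ε * π10 + (1 - ε) * π11)) / (x + 1)

/-- `f_b` for a binary symbol `b`. -/
noncomputable def fb (π00 π01 π10 π11 ε : ℝ) (b : Bool) : ℝ → ℝ :=
  if b then f₁ π00 π01 π10 π11 ε else f₀ π00 π01 π10 π11 ε

/-- The support of a measure on `ℝ`: the set of points all of whose open neighborhoods
have positive measure (the smallest closed set of full measure). -/
def measSupp (Q : Measure ℝ) : Set ℝ :=
  {x : ℝ | ∀ U : Set ℝ, IsOpen U → x ∈ U → 0 < Q U}

/-- Blackwell's invariance equation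
`Q(E) = ∫_{f_0^{−1}(E)} r_0 dQ + ∫_{f_1^{−1}(E)} r_1 dQ` for Borel `E ⊆ (0,∞)`. -/
def BlackwellInvariant (π00 π01 π10 π11 ε : ℝ) (Q : Measure ℝ) : Prop :=
  ∀ E : Set ℝ, MeasurableSet E → E ⊆ Set.Ioi (0 : ℝ) →
    Q E = (∫⁻ x in f₀ π00 π01 π10 π11 ε ⁻¹' E, ENNReal.ofReal (r₀ π00 π01 π10 π11 ε x) ∂Q)
      + ∫⁻ x in f₁ π00 π01 π10 π11 ε ⁻¹' E, ENNReal.ofReal (r₁ π00 π01 π10 π11 ε x) ∂Q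

/-- The set `L = ⋃_{n ≥ 1} { f_{i_1}∘⋯∘f_{i_n}(p_j) : i_1,…,i_n ∈ {0,1}, j ∈ {0,1} }`. -/
def setL (π00 π01 π10 π11 ε p₀ p₁ : ℝ) : Set ℝ :=
  {x : ℝ | ∃ n : ℕ, ∃ w : Fin (n + 1) → Bool, ∃ j : Bool,
    x = (List.ofFn w).foldr (fun i acc => fb π00 π01 π10 π11 ε i acc)
          (if j then p₁ else p₀)}


open MeasureTheory Real Set Filter

lemma fb_false (π00 π01 π10 π11 ε : ℝ) : fb π00 π01 π10 π11 ε false = f₀ π00 π01 π10 π11 ε := rfl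
lemma fb_true (π00 π01 π10 π11 ε : ℝ) : fb π00 π01 π10 π11 ε true = f₁ π00 π01 π10 π11 ε := rfl


structure Hyp (π00 π01 π10 π11 ε : ℝ) : Prop where
  h00 : 0 < π00
  h01 : 0 < π01
  h10 : 0 < π10
  h11 : 0 < π11
  hrow0 : π00 + π01 = 1
  hrow1 : π10 + π11 = 1
  hdet : 0 < π00 * π11 - π01 * π10
  hε0 : 0 < ε
  hε : ε < 1/2

namespace Hyp
variable {π00 π01 π10 π11 ε : ℝ} (h : Hyp π00 π01 π10 π11 ε)
include h

lemma hε1 : ε < 1 := lt_trans h.hε (by norm_num)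
lemma h1ε : 0 < 1 - ε := by linarith [h.hε1]
lemma hεle : ε ≤ 1 - ε := by linarith [h.hε]
lemma denom_pos {x : ℝ} (hx : 0 < x) : 0 < π01 * x + π11 := by
  have h1 := h.h01; have h2 := h.h11; positivity
lemma num_pos {x : ℝ} (hx : 0 < x) : 0 < π00 * x + π10 := by
  have h1 := h.h00; have h2 := h.h10; positivity

end Hyp

/-- the contraction ratio -/
noncomputable def sC (π00 π01 π10 π11 : ℝ) : ℝ :=
  (π00*π11 - π01*π10) / (π00*π11 + π01*π10 + 2*Real.sqrt (π00*π11*(π01*π10)))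

/-- log of the Möbius part -/
noncomputable def Lg (π00 π01 π10 π11 : ℝ) (x : ℝ) : ℝ :=
  Real.log (π00*x+π10) - Real.log (π01*x+π11)

namespace Hyp
variable {π00 π01 π10 π11 ε : ℝ} (h : Hyp π00 π01 π10 π11 ε)
include h

lemma S_pos : 0 < π00*π11 + π01*π10 + 2*Real.sqrt (π00*π11*(π01*π10)) := by
  have h1 := h.h00; have h2 := h.h01; have h3 := h.h10; have h4 := h.h11
  positivity

lemma sC_pos : 0 < sC π00 π01 π10 π11 := div_pos h.hdet h.S_pos

lemma sC_lt_one : sC π00 π01 π10 π11 < 1 := by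
  rw [sC, div_lt_one h.S_pos]
  have h1 : 0 ≤ Real.sqrt (π00*π11*(π01*π10)) := Real.sqrt_nonneg _
  nlinarith [mul_pos h.h01 h.h10]

/-- key algebraic inequality: `x·det ≤ s·(π00x+π10)(π01x+π11)` for `x > 0`. -/
lemma key_ineq {x : ℝ} (hx : 0 < x) :
    x * (π00*π11 - π01*π10) ≤ sC π00 π01 π10 π11 * ((π00*x+π10)*(π01*x+π11)) := by
  have hS := h.S_pos
  have hden : (π00*x+π10)*(π01*x+π11) ≥ (π00*π11 + π01*π10 + 2*Real.sqrt (π00*π11*(π01*π10))) * x := by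
    have h1 : Real.sqrt (π00*π11*(π01*π10)) = Real.sqrt (π00*π01) * Real.sqrt (π10*π11) := by
      rw [← Real.sqrt_mul (le_of_lt (mul_pos h.h00 h.h01))]
      ring_nf
    have h2 : Real.sqrt (π00*π01) ^ 2 = π00*π01 :=
      Real.sq_sqrt (le_of_lt (mul_pos h.h00 h.h01))
    have h3 : Real.sqrt (π10*π11) ^ 2 = π10*π11 :=
      Real.sq_sqrt (le_of_lt (mul_pos h.h10 h.h11))
    have expand : (π00*x+π10)*(π01*x+π11)
        - (π00*π11 + π01*π10 + 2*(Real.sqrt (π00*π01)*Real.sqrt (π10*π11)))*x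
        = (Real.sqrt (π00*π01)*x - Real.sqrt (π10*π11))^2 := by
      rw [sub_sq, mul_pow, h2, h3]; ring
    rw [ge_iff_le, h1]
    nlinarith [sq_nonneg (Real.sqrt (π00*π01) * x - Real.sqrt (π10*π11)), expand]
  rw [sC, div_mul_eq_mul_div, le_div_iff₀ hS]
  nlinarith [h.hdet, hx]

lemma Lg_hasDeriv {x : ℝ} (hx : 0 < x) :
    HasDerivAt (Lg π00 π01 π10 π11) (π00/(π00*x+π10) - π01/(π01*x+π11)) x := by
  have h1 : HasDerivAt (fun x : ℝ => π00*x+π10) π00 x := by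
    simpa using (hasDerivAt_id x).const_mul π00 |>.add_const π10
  have h2 : HasDerivAt (fun x : ℝ => π01*x+π11) π01 x := by
    simpa using (hasDerivAt_id x).const_mul π01 |>.add_const π11
  have l1 := (Real.hasDerivAt_log (ne_of_gt (h.num_pos hx))).comp x h1
  have l2 := (Real.hasDerivAt_log (ne_of_gt (h.denom_pos hx))).comp x h2
  have := l1.sub l2
  have e : Lg π00 π01 π10 π11 = ((Real.log ∘ fun x => π00*x+π10) - Real.log ∘ fun x => π01*x+π11) := rfl
  rw [e]; exact this.congr_deriv (by ring)

lemma Lg_mono : MonotoneOn (Lg π00 π01 π10 π11) (Set.Ioi 0) := by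
  apply monotoneOn_of_deriv_nonneg (convex_Ioi 0)
  · intro x hx
    exact ((h.Lg_hasDeriv hx).continuousAt).continuousWithinAt
  · rw [interior_Ioi]
    intro x hx
    exact (h.Lg_hasDeriv hx).differentiableAt.differentiableWithinAt
  · rw [interior_Ioi]
    intro x hx
    rw [(h.Lg_hasDeriv hx).deriv]
    have hn := h.num_pos hx; have hd := h.denom_pos hx
    rw [div_sub_div _ _ (ne_of_gt hn) (ne_of_gt hd)]
    apply div_nonneg _ (le_of_lt (mul_pos hn hd))
    nlinarith [h.hdet]

lemma phi_hasDeriv {x : ℝ} (hx : 0 < x) :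
    HasDerivAt (fun x => sC π00 π01 π10 π11 * Real.log x - Lg π00 π01 π10 π11 x)
      (sC π00 π01 π10 π11 * x⁻¹ - (π00/(π00*x+π10) - π01/(π01*x+π11))) x :=
  ((Real.hasDerivAt_log (ne_of_gt hx)).const_mul _).sub (h.Lg_hasDeriv hx)

lemma phi_mono : MonotoneOn (fun x => sC π00 π01 π10 π11 * Real.log x - Lg π00 π01 π10 π11 x)
    (Set.Ioi 0) := by
  apply monotoneOn_of_deriv_nonneg (convex_Ioi 0)
  · intro x hx
    exact ((h.phi_hasDeriv hx).continuousAt).continuousWithinAt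
  · rw [interior_Ioi]
    intro x hx
    exact (h.phi_hasDeriv hx).differentiableAt.differentiableWithinAt
  · rw [interior_Ioi]
    intro x hx
    rw [(h.phi_hasDeriv hx).deriv]
    have hn := h.num_pos hx; have hd := h.denom_pos hx
    have hx0 : (0:ℝ) < x := hx
    have heq : sC π00 π01 π10 π11 * x⁻¹ - (π00/(π00*x+π10) - π01/(π01*x+π11))
        = (sC π00 π01 π10 π11 * ((π00*x+π10)*(π01*x+π11)) - x * (π00*π11 - π01*π10))
          / (x * ((π00*x+π10)*(π01*x+π11))) := by
      have hx' : x ≠ 0 := ne_of_gt hx0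
      have hn' : π00*x+π10 ≠ 0 := ne_of_gt hn
      have hd' : π01*x+π11 ≠ 0 := ne_of_gt hd
      rw [div_sub_div _ _ hn' hd', inv_eq_one_div, mul_one_div, div_sub_div _ _ hx' (mul_ne_zero hn' hd')]
      try ring
      try exact Or.inl trivial
    rw [heq]
    exact div_nonneg (sub_nonneg.mpr (h.key_ineq hx0)) (by positivity)

/-- The central contraction estimate for the Möbius log. -/
lemma Lg_contract {x y : ℝ} (hx : 0 < x) (hy : 0 < y) :
    |Lg π00 π01 π10 π11 x - Lg π00 π01 π10 π11 y| ≤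
      sC π00 π01 π10 π11 * |Real.log x - Real.log y| := by
  rcases le_total y x with hxy | hxy
  · have h1 : Lg π00 π01 π10 π11 y ≤ Lg π00 π01 π10 π11 x := h.Lg_mono hy hx hxy
    have h2 : Real.log y ≤ Real.log x := Real.log_le_log (by exact hy) hxy
    have h3 := h.phi_mono (Set.mem_Ioi.mpr hy) (Set.mem_Ioi.mpr hx) hxy
    simp only at h3
    rw [abs_of_nonneg (sub_nonneg.mpr h1), abs_of_nonneg (sub_nonneg.mpr h2)]
    linarith
  · have h1 : Lg π00 π01 π10 π11 x ≤ Lg π00 π01 π10 π11 y := h.Lg_mono hx hy hxy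
    have h2 : Real.log x ≤ Real.log y := Real.log_le_log (by exact hx) hxy
    have h3 := h.phi_mono (Set.mem_Ioi.mpr hx) (Set.mem_Ioi.mpr hy) hxy
    simp only at h3
    rw [abs_of_nonpos (sub_nonpos.mpr h1), abs_of_nonpos (sub_nonpos.mpr h2)]
    linarith

end Hyp

noncomputable def mLo (π00 π01 π10 π11 ε : ℝ) : ℝ := (ε/(1-ε)) * (π10/π11)
noncomputable def mHi (π00 π01 π10 π11 ε : ℝ) : ℝ := ((1-ε)/ε) * (π00/π01)

namespace Hyp
variable {π00 π01 π10 π11 ε : ℝ} (h : Hyp π00 π01 π10 π11 ε)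
include h

lemma mLo_pos : 0 < mLo π00 π01 π10 π11 ε := by
  have := h.hε0; have := h.h1ε; have := h.h10; have := h.h11
  unfold mLo; positivity

lemma mHi_pos : 0 < mHi π00 π01 π10 π11 ε := by
  have := h.hε0; have := h.h1ε; have := h.h00; have := h.h01
  unfold mHi; positivity

lemma ratio_lb {x : ℝ} (hx : 0 < x) : π10/π11 ≤ (π00*x+π10)/(π01*x+π11) := by
  rw [div_le_div_iff₀ h.h11 (h.denom_pos hx)]
  nlinarith [h.hdet, hx]

lemma ratio_ub {x : ℝ} (hx : 0 < x) : (π00*x+π10)/(π01*x+π11) ≤ π00/π01 := by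
  rw [div_le_div_iff₀ (h.denom_pos hx) h.h01]
  nlinarith [h.hdet, hx]

lemma κ₀_pos : 0 < (1-ε)/ε := div_pos h.h1ε h.hε0
lemma κ₁_pos : 0 < ε/(1-ε) := div_pos h.hε0 h.h1ε
lemma κ_le : ε/(1-ε) ≤ (1-ε)/ε := by
  rw [div_le_div_iff₀ h.h1ε h.hε0]
  nlinarith [h.hεle, h.hε0]

lemma fb_mem {x : ℝ} (hx : 0 < x) (i : Bool) :
    fb π00 π01 π10 π11 ε i x ∈ Set.Icc (mLo π00 π01 π10 π11 ε) (mHi π00 π01 π10 π11 ε) := by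
  have hlb := h.ratio_lb hx
  have hub := h.ratio_ub hx
  have hbd : 0 < π10/π11 := div_pos h.h10 h.h11
  have hac : 0 < π00/π01 := div_pos h.h00 h.h01
  cases i with
  | false =>
    rw [fb_false]
    constructor
    · calc mLo π00 π01 π10 π11 ε ≤ ((1-ε)/ε) * (π10/π11) :=
            mul_le_mul_of_nonneg_right h.κ_le (le_of_lt hbd)
      _ ≤ f₀ π00 π01 π10 π11 ε x := mul_le_mul_of_nonneg_left hlb (le_of_lt h.κ₀_pos)
    · exact mul_le_mul_of_nonneg_left hub (le_of_lt h.κ₀_pos)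
  | true =>
    rw [fb_true]
    constructor
    · exact mul_le_mul_of_nonneg_left hlb (le_of_lt h.κ₁_pos)
    · calc f₁ π00 π01 π10 π11 ε x ≤ (ε/(1-ε)) * (π00/π01) :=
            mul_le_mul_of_nonneg_left hub (le_of_lt h.κ₁_pos)
      _ ≤ mHi π00 π01 π10 π11 ε := mul_le_mul_of_nonneg_right h.κ_le (le_of_lt hac)

lemma fb_pos {x : ℝ} (hx : 0 < x) (i : Bool) : 0 < fb π00 π01 π10 π11 ε i x :=
  lt_of_lt_of_le h.mLo_pos (h.fb_mem hx i).1

lemma log_fb {x : ℝ} (hx : 0 < x) (i : Bool) :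
    Real.log (fb π00 π01 π10 π11 ε i x)
      = Real.log (if i then ε/(1-ε) else (1-ε)/ε) + Lg π00 π01 π10 π11 x := by
  have hratio : (π00*x+π10)/(π01*x+π11) ≠ 0 :=
    ne_of_gt (div_pos (h.num_pos hx) (h.denom_pos hx))
  have hLg : Real.log ((π00*x+π10)/(π01*x+π11)) = Lg π00 π01 π10 π11 x :=
    Real.log_div (ne_of_gt (h.num_pos hx)) (ne_of_gt (h.denom_pos hx))
  cases i with
  | false =>
    rw [fb_false]
    show Real.log ((1-ε)/ε * ((π00*x+π10)/(π01*x+π11))) = _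
    rw [Real.log_mul (ne_of_gt h.κ₀_pos) hratio, hLg]
    simp
  | true =>
    rw [fb_true]
    show Real.log (ε/(1-ε) * ((π00*x+π10)/(π01*x+π11))) = _
    rw [Real.log_mul (ne_of_gt h.κ₁_pos) hratio, hLg]
    simp

lemma fb_contract {x y : ℝ} (hx : 0 < x) (hy : 0 < y) (i : Bool) :
    |Real.log (fb π00 π01 π10 π11 ε i x) - Real.log (fb π00 π01 π10 π11 ε i y)|
      ≤ sC π00 π01 π10 π11 * |Real.log x - Real.log y| := by
  rw [h.log_fb hx i, h.log_fb hy i]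
  have : Real.log (if i then ε/(1-ε) else (1-ε)/ε) + Lg π00 π01 π10 π11 x
      - (Real.log (if i then ε/(1-ε) else (1-ε)/ε) + Lg π00 π01 π10 π11 y)
      = Lg π00 π01 π10 π11 x - Lg π00 π01 π10 π11 y := by ring
  rw [this]
  exact h.Lg_contract hx hy

lemma fb_continuousAt {x : ℝ} (hx : 0 < x) (i : Bool) :
    ContinuousAt (fb π00 π01 π10 π11 ε i) x := by
  have hd : ContinuousAt (fun x : ℝ => (π00*x+π10)/(π01*x+π11)) x :=
    ContinuousAt.div (by fun_prop) (by fun_prop) (ne_of_gt (h.denom_pos hx))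
  cases i with
  | false =>
    rw [fb_false]
    exact (continuousAt_const.mul hd :)
  | true =>
    rw [fb_true]
    exact (continuousAt_const.mul hd :)

end Hyp

lemma fb_measurable (π00 π01 π10 π11 ε : ℝ) (i : Bool) :
    Measurable (fb π00 π01 π10 π11 ε i) := by
  have key : ∀ κ : ℝ, Measurable fun x : ℝ => κ * ((π00*x+π10)/(π01*x+π11)) := fun κ =>
    measurable_const.mul ((by fun_prop : Measurable fun x : ℝ => π00*x+π10).div (by fun_prop))
  cases i
  · rw [fb_false]; exact key _
  · rw [fb_true]; exact key _

lemma r₀_measurable (π00 π01 π10 π11 ε : ℝ) : Measurable (r₀ π00 π01 π10 π11 ε) := by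
  unfold r₀; fun_prop

lemma r₁_measurable (π00 π01 π10 π11 ε : ℝ) : Measurable (r₁ π00 π01 π10 π11 ε) := by
  unfold r₁; fun_prop

namespace Hyp
variable {π00 π01 π10 π11 ε : ℝ} (h : Hyp π00 π01 π10 π11 ε)
include h

lemma r_sum {x : ℝ} (hx : 0 < x) :
    r₀ π00 π01 π10 π11 ε x + r₁ π00 π01 π10 π11 ε x = 1 := by
  have hx1 : x + 1 ≠ 0 := by positivity
  unfold r₀ r₁
  rw [← add_div, div_eq_one_iff_eq hx1]
  nlinarith [h.hrow0, h.hrow1]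

noncomputable def cR (π00 π01 π10 π11 ε : ℝ) : ℝ :=
  min (min ((1-ε)*π00+ε*π01) ((1-ε)*π10+ε*π11)) (min (ε*π00+(1-ε)*π01) (ε*π10+(1-ε)*π11))

lemma cR_pos : 0 < cR π00 π01 π10 π11 ε := by
  have := h.hε0; have := h.h1ε; have := h.h00; have := h.h01; have := h.h10; have := h.h11
  unfold cR
  apply lt_min (lt_min (by nlinarith) (by nlinarith)) (lt_min (by nlinarith) (by nlinarith))

omit h in
lemma linfrac_lb {A B x : ℝ} (hA : 0 < A) (hB : 0 < B) (hx : 0 < x) :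
    min A B ≤ (A*x+B)/(x+1) := by
  rw [le_div_iff₀ (by positivity)]
  rcases le_total A B with hab | hab
  · rw [min_eq_left hab]; nlinarith
  · rw [min_eq_right hab]; nlinarith

lemma r₀_lb {x : ℝ} (hx : 0 < x) : cR π00 π01 π10 π11 ε ≤ r₀ π00 π01 π10 π11 ε x := by
  have := h.hε0; have := h.h1ε; have := h.h00; have := h.h01; have := h.h10; have := h.h11
  calc cR π00 π01 π10 π11 ε ≤ min ((1-ε)*π00+ε*π01) ((1-ε)*π10+ε*π11) := min_le_left _ _
  _ ≤ r₀ π00 π01 π10 π11 ε x := Hyp.linfrac_lb (by nlinarith) (by nlinarith) hx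

lemma r₁_lb {x : ℝ} (hx : 0 < x) : cR π00 π01 π10 π11 ε ≤ r₁ π00 π01 π10 π11 ε x := by
  have := h.hε0; have := h.h1ε; have := h.h00; have := h.h01; have := h.h10; have := h.h11
  calc cR π00 π01 π10 π11 ε ≤ min (ε*π00+(1-ε)*π01) (ε*π10+(1-ε)*π11) := min_le_right _ _
  _ ≤ r₁ π00 π01 π10 π11 ε x := Hyp.linfrac_lb (by nlinarith) (by nlinarith) hx

lemma r₀_pos {x : ℝ} (hx : 0 < x) : 0 < r₀ π00 π01 π10 π11 ε x :=
  lt_of_lt_of_le h.cR_pos (h.r₀_lb hx)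

lemma r₁_pos {x : ℝ} (hx : 0 < x) : 0 < r₁ π00 π01 π10 π11 ε x :=
  lt_of_lt_of_le h.cR_pos (h.r₁_lb hx)

end Hyp


/-- composition along a word -/
noncomputable def Fl (π00 π01 π10 π11 ε : ℝ) (l : List Bool) (x : ℝ) : ℝ :=
  l.foldr (fun i acc => fb π00 π01 π10 π11 ε i acc) x

lemma Fl_nil (π00 π01 π10 π11 ε x : ℝ) : Fl π00 π01 π10 π11 ε [] x = x := rfl

lemma Fl_cons (π00 π01 π10 π11 ε x : ℝ) (i : Bool) (l : List Bool) :
    Fl π00 π01 π10 π11 ε (i :: l) x = fb π00 π01 π10 π11 ε i (Fl π00 π01 π10 π11 ε l x) := rfl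

lemma Fl_append (π00 π01 π10 π11 ε x : ℝ) (l₁ l₂ : List Bool) :
    Fl π00 π01 π10 π11 ε (l₁ ++ l₂) x = Fl π00 π01 π10 π11 ε l₁ (Fl π00 π01 π10 π11 ε l₂ x) :=
  List.foldr_append

lemma Fl_replicate (π00 π01 π10 π11 ε x : ℝ) (k : ℕ) (j : Bool) :
    Fl π00 π01 π10 π11 ε (List.replicate k j) x = (fb π00 π01 π10 π11 ε j)^[k] x := by
  induction k with
  | zero => rfl
  | succ k ih =>
      rw [List.replicate_succ, Fl_cons, ih, Function.iterate_succ_apply']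

lemma Fl_measurable (π00 π01 π10 π11 ε : ℝ) (l : List Bool) :
    Measurable (Fl π00 π01 π10 π11 ε l) := by
  induction l with
  | nil => exact measurable_id
  | cons i l ih => exact (fb_measurable π00 π01 π10 π11 ε i).comp ih

namespace Hyp
variable {π00 π01 π10 π11 ε : ℝ} (h : Hyp π00 π01 π10 π11 ε)
include h

lemma Fl_pos {x : ℝ} (hx : 0 < x) (l : List Bool) : 0 < Fl π00 π01 π10 π11 ε l x := by
  induction l with
  | nil => exact hx
  | cons i l ih => exact h.fb_pos ih i

lemma Fl_continuousAt {x : ℝ} (hx : 0 < x) (l : List Bool) :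
    ContinuousAt (Fl π00 π01 π10 π11 ε l) x := by
  induction l with
  | nil => exact continuousAt_id
  | cons i l ih =>
      exact ((h.fb_continuousAt (h.Fl_pos hx l) i).comp ih :)

lemma iterate_pos {x : ℝ} (hx : 0 < x) (j : Bool) (k : ℕ) :
    0 < (fb π00 π01 π10 π11 ε j)^[k] x := by
  induction k with
  | zero => exact hx
  | succ k ih => rw [Function.iterate_succ_apply']; exact h.fb_pos ih j

lemma iterate_tendsto {x p : ℝ} (j : Bool) (hx : 0 < x) (hp : 0 < p)
    (hfix : fb π00 π01 π10 π11 ε j p = p) :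
    Filter.Tendsto (fun k => (fb π00 π01 π10 π11 ε j)^[k] x) Filter.atTop (nhds p) := by
  set s := sC π00 π01 π10 π11 with hs
  have hs0 : 0 ≤ s := le_of_lt h.sC_pos
  have hs1 : s < 1 := h.sC_lt_one
  have hbound : ∀ k, |Real.log ((fb π00 π01 π10 π11 ε j)^[k] x) - Real.log p|
      ≤ s^k * |Real.log x - Real.log p| := by
    intro k
    induction k with
    | zero => simp
    | succ k ih =>
        rw [Function.iterate_succ_apply']
        calc |Real.log (fb π00 π01 π10 π11 ε j ((fb π00 π01 π10 π11 ε j)^[k] x)) - Real.log p|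
            = |Real.log (fb π00 π01 π10 π11 ε j ((fb π00 π01 π10 π11 ε j)^[k] x))
                - Real.log (fb π00 π01 π10 π11 ε j p)| := by rw [hfix]
          _ ≤ s * |Real.log ((fb π00 π01 π10 π11 ε j)^[k] x) - Real.log p| :=
              h.fb_contract (h.iterate_pos hx j k) hp j
          _ ≤ s * (s^k * |Real.log x - Real.log p|) :=
              mul_le_mul_of_nonneg_left ih hs0
          _ = s^(k+1) * |Real.log x - Real.log p| := by ring
  have hdist : Filter.Tendsto
      (fun k => dist (Real.log ((fb π00 π01 π10 π11 ε j)^[k] x)) (Real.log p))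
      Filter.atTop (nhds 0) := by
    have hg : Filter.Tendsto (fun k : ℕ => s^k * |Real.log x - Real.log p|)
        Filter.atTop (nhds 0) := by
      have := (tendsto_pow_atTop_nhds_zero_of_lt_one hs0 hs1).mul_const
        |Real.log x - Real.log p|
      simpa using this
    exact squeeze_zero (fun k => dist_nonneg)
      (fun k => by rw [Real.dist_eq]; exact hbound k) hg
  have hlog : Filter.Tendsto (fun k => Real.log ((fb π00 π01 π10 π11 ε j)^[k] x))
      Filter.atTop (nhds (Real.log p)) := tendsto_iff_dist_tendsto_zero.mpr hdist
  have hexp := (Real.continuous_exp.tendsto (Real.log p)).comp hlog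
  rw [Real.exp_log hp] at hexp
  apply hexp.congr
  intro k
  simp only [Function.comp_apply]
  exact Real.exp_log (h.iterate_pos hx j k)

end Hyp

/-- membership in setL from a nonempty word -/
lemma Fl_mem_setL (π00 π01 π10 π11 ε p₀ p₁ : ℝ) (i : Bool) (l : List Bool) (j : Bool) :
    Fl π00 π01 π10 π11 ε (i :: l) (if j then p₁ else p₀) ∈ setL π00 π01 π10 π11 ε p₀ p₁ := by
  refine ⟨l.length, (i :: l).get, j, ?_⟩
  rw [List.ofFn_get]
  rfl

lemma setL_char (π00 π01 π10 π11 ε p₀ p₁ : ℝ) {x : ℝ}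
    (hx : x ∈ setL π00 π01 π10 π11 ε p₀ p₁) :
    ∃ i : Bool, ∃ l : List Bool, ∃ j : Bool,
      x = Fl π00 π01 π10 π11 ε (i :: l) (if j then p₁ else p₀) := by
  obtain ⟨n, w, j, hw⟩ := hx
  refine ⟨w 0, List.ofFn (fun i : Fin n => w i.succ), j, ?_⟩
  rw [hw, ← List.ofFn_succ]
  rfl


section MeasureLemmas

variable {π00 π01 π10 π11 ε : ℝ} (h : Hyp π00 π01 π10 π11 ε)
  (Q : Measure ℝ) [IsProbabilityMeasure Q]

lemma compl_null (hQpos : Q (Set.Ioi 0) = 1) : Q (Set.Ioi (0:ℝ))ᶜ = 0 := by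
  rw [prob_compl_eq_one_sub measurableSet_Ioi, hQpos, tsub_self]

include h in
/-- the fundamental change-of-variables identity for Blackwell's measure -/
lemma transfer (hQpos : Q (Set.Ioi 0) = 1)
    (hQinv : BlackwellInvariant π00 π01 π10 π11 ε Q)
    (φ : ℝ → ENNReal) (hφ : Measurable φ) :
    ∫⁻ x in Set.Ioi 0, φ x ∂Q
      = (∫⁻ x in Set.Ioi 0, ENNReal.ofReal (r₀ π00 π01 π10 π11 ε x) * φ (f₀ π00 π01 π10 π11 ε x) ∂Q)
      + ∫⁻ x in Set.Ioi 0, ENNReal.ofReal (r₁ π00 π01 π10 π11 ε x) * φ (f₁ π00 π01 π10 π11 ε x) ∂Q := by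
  have hf0 : Measurable (f₀ π00 π01 π10 π11 ε) := by
    rw [← fb_false π00 π01 π10 π11 ε]; exact fb_measurable _ _ _ _ _ _
  have hf1 : Measurable (f₁ π00 π01 π10 π11 ε) := by
    rw [← fb_true π00 π01 π10 π11 ε]; exact fb_measurable _ _ _ _ _ _
  have hw0 : Measurable (fun x => ENNReal.ofReal (r₀ π00 π01 π10 π11 ε x)) :=
    (r₀_measurable π00 π01 π10 π11 ε).ennreal_ofReal
  have hw1 : Measurable (fun x => ENNReal.ofReal (r₁ π00 π01 π10 π11 ε x)) :=
    (r₁_measurable π00 π01 π10 π11 ε).ennreal_ofReal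
  set μ₀ := Q.withDensity (fun x => ENNReal.ofReal (r₀ π00 π01 π10 π11 ε x)) with hμ₀
  set μ₁ := Q.withDensity (fun x => ENNReal.ofReal (r₁ π00 π01 π10 π11 ε x)) with hμ₁
  have hres : Q.restrict (Set.Ioi 0)
      = (μ₀.map (f₀ π00 π01 π10 π11 ε) + μ₁.map (f₁ π00 π01 π10 π11 ε)).restrict (Set.Ioi 0) := by
    ext s hs
    rw [Measure.restrict_apply hs, Measure.restrict_apply hs]
    have hsub : s ∩ Set.Ioi 0 ⊆ Set.Ioi (0:ℝ) := Set.inter_subset_right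
    have hms : MeasurableSet (s ∩ Set.Ioi 0) := hs.inter measurableSet_Ioi
    rw [hQinv _ hms hsub, Measure.add_apply,
      Measure.map_apply hf0 hms, Measure.map_apply hf1 hms,
      withDensity_apply _ (hf0 hms), withDensity_apply _ (hf1 hms)]
  have step : ∀ (f : ℝ → ℝ) (hf : Measurable f)
      (hfpos : ∀ x : ℝ, 0 < x → 0 < f x)
      (w : ℝ → ENNReal) (hw : Measurable w),
      ∫⁻ x, φ x ∂((Q.withDensity w).map f).restrict (Set.Ioi 0)
        = ∫⁻ x in Set.Ioi 0, w x * φ (f x) ∂Q := by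
    intro f hf hfpos w hw
    rw [Measure.restrict_map hf measurableSet_Ioi, lintegral_map hφ hf,
      restrict_withDensity (hf measurableSet_Ioi),
      lintegral_withDensity_eq_lintegral_mul _ hw (show Measurable fun x => φ (f x) from hφ.comp hf)]
    have hae : (f ⁻¹' Set.Ioi 0 : Set ℝ) =ᵐ[Q] Set.Ioi 0 := by
      rw [MeasureTheory.ae_eq_set]
      constructor
      · exact measure_mono_null (fun x hx => hx.2) (compl_null Q hQpos)
      · have : (Set.Ioi 0 \ (f ⁻¹' Set.Ioi 0) : Set ℝ) = ∅ := by
          ext x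
          simp only [Set.mem_diff, Set.mem_preimage, Set.mem_Ioi, Set.mem_empty_iff_false,
            iff_false, not_and, not_lt]
          intro hx
          exact not_le.mpr (hfpos x hx)
        rw [this, measure_empty]
    rw [Measure.restrict_congr_set hae]
    simp [Pi.mul_apply]
  calc ∫⁻ x in Set.Ioi 0, φ x ∂Q
      = ∫⁻ x, φ x ∂((μ₀.map (f₀ π00 π01 π10 π11 ε) + μ₁.map (f₁ π00 π01 π10 π11 ε)).restrict (Set.Ioi 0)) := by
        rw [← hres]
    _ = (∫⁻ x, φ x ∂(μ₀.map (f₀ π00 π01 π10 π11 ε)).restrict (Set.Ioi 0))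
        + ∫⁻ x, φ x ∂(μ₁.map (f₁ π00 π01 π10 π11 ε)).restrict (Set.Ioi 0) := by
        rw [Measure.restrict_add, lintegral_add_measure]
    _ = _ := by
        rw [step _ hf0 (fun x hx => by
              have := h.fb_pos hx false; rwa [fb_false] at this) _ hw0,
          step _ hf1 (fun x hx => by
              have := h.fb_pos hx true; rwa [fb_true] at this) _ hw1]

include h in
lemma Q_Icc_one (hQpos : Q (Set.Ioi 0) = 1)
    (hQinv : BlackwellInvariant π00 π01 π10 π11 ε Q) :
    Q (Set.Icc (mLo π00 π01 π10 π11 ε) (mHi π00 π01 π10 π11 ε)) = 1 := by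
  set E : Set ℝ := Set.Ioi 0 \ Set.Icc (mLo π00 π01 π10 π11 ε) (mHi π00 π01 π10 π11 ε) with hE
  have hEm : MeasurableSet E := measurableSet_Ioi.diff measurableSet_Icc
  have hQE : Q E = 0 := by
    have hterm : ∀ i : Bool, ∫⁻ x in fb π00 π01 π10 π11 ε i ⁻¹' E,
        ENNReal.ofReal ((if i then r₁ π00 π01 π10 π11 ε else r₀ π00 π01 π10 π11 ε) x) ∂Q = 0 := by
      intro i
      have hae : (fb π00 π01 π10 π11 ε i ⁻¹' E : Set ℝ) =ᵐ[Q] (∅ : Set ℝ) := by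
        rw [MeasureTheory.ae_eq_set]
        constructor
        · apply measure_mono_null _ (compl_null Q hQpos)
          intro x hx
          simp only [Set.mem_diff, Set.mem_preimage] at hx
          intro hxpos
          exact hx.1.2 (h.fb_mem hxpos i)
        · simp
      rw [Measure.restrict_congr_set hae]
      simp
    have := hQinv E hEm Set.diff_subset
    rw [this]
    have h0 := hterm false
    have h1 := hterm true
    simp only [if_pos, if_neg, Bool.false_eq_true, if_false, if_true] at h0 h1
    rw [fb_false] at h0; rw [fb_true] at h1
    rw [h0, h1, add_zero]
  have hsplit : Q (Set.Ioi 0) ≤ Q (Set.Icc (mLo π00 π01 π10 π11 ε) (mHi π00 π01 π10 π11 ε)) + Q E := by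
    rw [← hQE] at *
    calc Q (Set.Ioi 0) ≤ Q (Set.Icc (mLo π00 π01 π10 π11 ε) (mHi π00 π01 π10 π11 ε) ∪ E) := by
          apply measure_mono
          intro x hx
          by_cases hm : x ∈ Set.Icc (mLo π00 π01 π10 π11 ε) (mHi π00 π01 π10 π11 ε)
          · exact Or.inl hm
          · exact Or.inr ⟨hx, hm⟩
      _ ≤ _ := measure_union_le _ _
  rw [hQpos, hQE, add_zero] at hsplit
  exact le_antisymm prob_le_one hsplit

include h in
lemma mass_step_aux {E : Set ℝ} (hEm : MeasurableSet E)
    (f : ℝ → ℝ) (hf : Measurable f) (r : ℝ → ℝ) (hr : Measurable r)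
    (hrlb : ∀ x : ℝ, 0 < x → Hyp.cR π00 π01 π10 π11 ε ≤ r x)
    (hbig : ∫⁻ x in f ⁻¹' E, ENNReal.ofReal (r x) ∂Q ≤ Q E) :
    ENNReal.ofReal (Hyp.cR π00 π01 π10 π11 ε) * Q (Set.Ioi 0 ∩ f ⁻¹' E) ≤ Q E := by
  refine le_trans ?_ hbig
  calc ENNReal.ofReal (Hyp.cR π00 π01 π10 π11 ε) * Q (Set.Ioi 0 ∩ f ⁻¹' E)
      = ∫⁻ _ in Set.Ioi 0 ∩ f ⁻¹' E, ENNReal.ofReal (Hyp.cR π00 π01 π10 π11 ε) ∂Q := by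
        rw [setLIntegral_const, mul_comm]
    _ ≤ ∫⁻ x in Set.Ioi 0 ∩ f ⁻¹' E, ENNReal.ofReal (r x) ∂Q :=
        setLIntegral_mono hr.ennreal_ofReal
          (fun x hx => ENNReal.ofReal_le_ofReal (hrlb x hx.1))
    _ ≤ ∫⁻ x in f ⁻¹' E, ENNReal.ofReal (r x) ∂Q :=
        lintegral_mono_set Set.inter_subset_right

include h in
/-- one-step mass estimate -/
lemma mass_step (hQinv : BlackwellInvariant π00 π01 π10 π11 ε Q)
    {E : Set ℝ} (hEm : MeasurableSet E) (hEsub : E ⊆ Set.Ioi 0) (i : Bool) :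
    ENNReal.ofReal (Hyp.cR π00 π01 π10 π11 ε)
      * Q (Set.Ioi 0 ∩ fb π00 π01 π10 π11 ε i ⁻¹' E) ≤ Q E := by
  have hinv := hQinv E hEm hEsub
  cases i
  · rw [fb_false]
    refine mass_step_aux h Q hEm _ ?_ _ (r₀_measurable π00 π01 π10 π11 ε)
        (fun x hx => h.r₀_lb hx) ?_
    · rw [← fb_false π00 π01 π10 π11 ε]; exact fb_measurable _ _ _ _ _ _
    · rw [hinv]; exact le_add_right le_rfl
  · rw [fb_true]
    refine mass_step_aux h Q hEm _ ?_ _ (r₁_measurable π00 π01 π10 π11 ε)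
        (fun x hx => h.r₁_lb hx) ?_
    · rw [← fb_true π00 π01 π10 π11 ε]; exact fb_measurable _ _ _ _ _ _
    · rw [hinv]; exact le_add_left le_rfl

include h in
/-- iterated mass estimate along a word -/
lemma mass_word (hQinv : BlackwellInvariant π00 π01 π10 π11 ε Q) (l : List Bool) :
    ∀ E : Set ℝ, MeasurableSet E → E ⊆ Set.Ioi 0 →
    ENNReal.ofReal (Hyp.cR π00 π01 π10 π11 ε) ^ l.length
      * Q (Set.Ioi 0 ∩ Fl π00 π01 π10 π11 ε l ⁻¹' E) ≤ Q E := by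
  induction l with
  | nil =>
      intro E hEm hEsub
      simp only [List.length_nil, pow_zero, one_mul]
      apply measure_mono
      intro x hx
      exact hx.2
  | cons i l ih =>
      intro E hEm hEsub
      set E' : Set ℝ := fb π00 π01 π10 π11 ε i ⁻¹' E ∩ Set.Ioi 0 with hE'
      have hE'm : MeasurableSet E' := (fb_measurable π00 π01 π10 π11 ε i hEm).inter measurableSet_Ioi
      have hE'sub : E' ⊆ Set.Ioi 0 := Set.inter_subset_right
      have hkey : Set.Ioi 0 ∩ Fl π00 π01 π10 π11 ε (i :: l) ⁻¹' E
          = Set.Ioi 0 ∩ Fl π00 π01 π10 π11 ε l ⁻¹' E' := by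
        ext x
        simp only [Set.mem_inter_iff, Set.mem_preimage, Fl_cons, hE', Set.mem_Ioi]
        constructor
        · rintro ⟨hx, hfx⟩
          exact ⟨hx, hfx, h.Fl_pos hx l⟩
        · rintro ⟨hx, hfx, _⟩
          exact ⟨hx, hfx⟩
      rw [hkey]
      calc ENNReal.ofReal (Hyp.cR π00 π01 π10 π11 ε) ^ (i :: l).length
            * Q (Set.Ioi 0 ∩ Fl π00 π01 π10 π11 ε l ⁻¹' E')
          = ENNReal.ofReal (Hyp.cR π00 π01 π10 π11 ε)
              * (ENNReal.ofReal (Hyp.cR π00 π01 π10 π11 ε) ^ l.length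
                * Q (Set.Ioi 0 ∩ Fl π00 π01 π10 π11 ε l ⁻¹' E')) := by
            rw [List.length_cons, pow_succ]
            ring
        _ ≤ ENNReal.ofReal (Hyp.cR π00 π01 π10 π11 ε) * Q E' :=
            mul_le_mul_right (ih E' hE'm hE'sub) _
        _ ≤ Q E := by
            have := mass_step h Q hQinv hEm hEsub i
            rwa [Set.inter_comm] at this

end MeasureLemmas

/-- Theorem 3.1: the support of Blackwell's measure equals the closure of `L`. -/
theorem support_blackwell_eq_closure_L (π00 π01 π10 π11 ε : ℝ)
    (h00 : 0 < π00) (h01 : 0 < π01) (h10 : 0 < π10) (h11 : 0 < π11)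
    (hrow0 : π00 + π01 = 1) (hrow1 : π10 + π11 = 1)
    (hdet : 0 < π00 * π11 - π01 * π10)
    (hε0 : 0 < ε) (hε : ε < 1 / 2)
    (p₀ p₁ : ℝ) (hp₀ : 0 < p₀) (hp₁ : 0 < p₁)
    (hfix₀ : f₀ π00 π01 π10 π11 ε p₀ = p₀) (hfix₁ : f₁ π00 π01 π10 π11 ε p₁ = p₁)
    (huniq₀ : ∀ q : ℝ, 0 < q → f₀ π00 π01 π10 π11 ε q = q → q = p₀)
    (huniq₁ : ∀ q : ℝ, 0 < q → f₁ π00 π01 π10 π11 ε q = q → q = p₁)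
    (Q : Measure ℝ) [IsProbabilityMeasure Q] (hQpos : Q (Set.Ioi 0) = 1)
    (hQinv : BlackwellInvariant π00 π01 π10 π11 ε Q) :
    measSupp Q = closure (setL π00 π01 π10 π11 ε p₀ p₁) := by
  have h : Hyp π00 π01 π10 π11 ε := ⟨h00, h01, h10, h11, hrow0, hrow1, hdet, hε0, hε⟩
  -- abbreviations
  have hp0L : p₀ ∈ setL π00 π01 π10 π11 ε p₀ p₁ := by
    refine ⟨0, fun _ => false, false, ?_⟩
    have h1 : List.ofFn (fun _ : Fin 1 => false) = [false] := by
      simp [List.ofFn_succ]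
    rw [h1]
    simp only [List.foldr_cons, List.foldr_nil, Bool.false_eq_true, if_false]
    rw [fb_false]
    exact hfix₀.symm
  have hbasepos : ∀ j : Bool, 0 < (if j then p₁ else p₀) := by
    intro j; cases j <;> simp [hp₀, hp₁]
  have hLsub : setL π00 π01 π10 π11 ε p₀ p₁
      ⊆ Set.Icc (mLo π00 π01 π10 π11 ε) (mHi π00 π01 π10 π11 ε) := by
    intro x hx
    obtain ⟨i, l, j, rfl⟩ := setL_char π00 π01 π10 π11 ε p₀ p₁ hx
    rw [Fl_cons]
    exact h.fb_mem (h.Fl_pos (hbasepos j) l) i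
  have hAsub : closure (setL π00 π01 π10 π11 ε p₀ p₁)
      ⊆ Set.Icc (mLo π00 π01 π10 π11 ε) (mHi π00 π01 π10 π11 ε) :=
    closure_minimal hLsub isClosed_Icc
  have hApos : closure (setL π00 π01 π10 π11 ε p₀ p₁) ⊆ Set.Ioi 0 :=
    fun x hx => lt_of_lt_of_le h.mLo_pos (hAsub hx).1
  have hAne : (closure (setL π00 π01 π10 π11 ε p₀ p₁)).Nonempty := ⟨p₀, subset_closure hp0L⟩
  have hAcomp : IsCompact (closure (setL π00 π01 π10 π11 ε p₀ p₁)) :=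
    IsCompact.of_isClosed_subset isCompact_Icc isClosed_closure hAsub
  have hfbA : ∀ i : Bool, ∀ a ∈ closure (setL π00 π01 π10 π11 ε p₀ p₁),
      fb π00 π01 π10 π11 ε i a ∈ closure (setL π00 π01 π10 π11 ε p₀ p₁) := by
    intro i a ha
    have hcont : ContinuousOn (fb π00 π01 π10 π11 ε i) (closure (setL π00 π01 π10 π11 ε p₀ p₁)) :=
      fun x hx => (h.fb_continuousAt (hApos hx) i).continuousWithinAt
    have himg := hcont.image_closure
    have hLL : fb π00 π01 π10 π11 ε i '' setL π00 π01 π10 π11 ε p₀ p₁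
        ⊆ setL π00 π01 π10 π11 ε p₀ p₁ := by
      rintro _ ⟨y, hy, rfl⟩
      obtain ⟨i', l, j, rfl⟩ := setL_char π00 π01 π10 π11 ε p₀ p₁ hy
      rw [← Fl_cons]
      exact Fl_mem_setL π00 π01 π10 π11 ε p₀ p₁ i (i' :: l) j
    have : fb π00 π01 π10 π11 ε i a ∈
        fb π00 π01 π10 π11 ε i '' closure (setL π00 π01 π10 π11 ε p₀ p₁) := ⟨a, ha, rfl⟩
    exact closure_mono hLL (himg this)
  -- Direction 1 : closure L ⊆ measSupp Q
  have hLsupp : setL π00 π01 π10 π11 ε p₀ p₁ ⊆ measSupp Q := by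
    intro y hy
    obtain ⟨i, l, j, rfl⟩ := setL_char π00 π01 π10 π11 ε p₀ p₁ hy
    intro U hUo hyU
    have hpjpos : 0 < (if j then p₁ else p₀) := hbasepos j
    have hfixj : fb π00 π01 π10 π11 ε j (if j then p₁ else p₀) = (if j then p₁ else p₀) := by
      cases j
      · simp only [Bool.false_eq_true, if_false]; rw [fb_false]; exact hfix₀
      · simp only [if_true]; rw [fb_true]; exact hfix₁
    have hcover : Set.Ioi (0:ℝ) ⊆ ⋃ k : ℕ,
        (Set.Ioi 0 ∩ (Fl π00 π01 π10 π11 ε (i :: l) ∘ (fb π00 π01 π10 π11 ε j)^[k]) ⁻¹' U) := by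
      intro x hx
      have htend := h.iterate_tendsto j hx hpjpos hfixj
      have hFcont : ContinuousAt (Fl π00 π01 π10 π11 ε (i :: l)) (if j then p₁ else p₀) :=
        h.Fl_continuousAt hpjpos _
      have hcomp : Filter.Tendsto
          (fun k => Fl π00 π01 π10 π11 ε (i :: l) ((fb π00 π01 π10 π11 ε j)^[k] x))
          Filter.atTop (nhds (Fl π00 π01 π10 π11 ε (i :: l) (if j then p₁ else p₀))) :=
        hFcont.tendsto.comp htend
      have hev := hcomp.eventually_mem (hUo.mem_nhds hyU)
      obtain ⟨k, hk⟩ := hev.exists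
      exact Set.mem_iUnion.mpr ⟨k, hx, hk⟩
    have hpos : ∃ k : ℕ, 0 < Q (Set.Ioi 0 ∩
        (Fl π00 π01 π10 π11 ε (i :: l) ∘ (fb π00 π01 π10 π11 ε j)^[k]) ⁻¹' U) := by
      by_contra hcon
      push_neg at hcon
      have hz : ∀ k : ℕ, Q (Set.Ioi 0 ∩
          (Fl π00 π01 π10 π11 ε (i :: l) ∘ (fb π00 π01 π10 π11 ε j)^[k]) ⁻¹' U) = 0 :=
        fun k => le_antisymm (hcon k) zero_le
      have : Q (Set.Ioi 0) = 0 := by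
        refine le_antisymm ?_ zero_le
        calc Q (Set.Ioi 0) ≤ Q (⋃ k : ℕ, (Set.Ioi 0 ∩
              (Fl π00 π01 π10 π11 ε (i :: l) ∘ (fb π00 π01 π10 π11 ε j)^[k]) ⁻¹' U)) :=
            measure_mono hcover
          _ ≤ ∑' k : ℕ, Q (Set.Ioi 0 ∩
              (Fl π00 π01 π10 π11 ε (i :: l) ∘ (fb π00 π01 π10 π11 ε j)^[k]) ⁻¹' U) :=
            measure_iUnion_le _
          _ = 0 := by simp [hz]
      rw [hQpos] at this
      exact one_ne_zero this
    obtain ⟨k, hk⟩ := hpos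
    have hword := mass_word h Q hQinv ((i :: l) ++ List.replicate k j) (U ∩ Set.Ioi 0)
      (hUo.measurableSet.inter measurableSet_Ioi) Set.inter_subset_right
    have hsub2 : Set.Ioi 0 ∩
        (Fl π00 π01 π10 π11 ε (i :: l) ∘ (fb π00 π01 π10 π11 ε j)^[k]) ⁻¹' U
        ⊆ Set.Ioi 0 ∩ Fl π00 π01 π10 π11 ε ((i :: l) ++ List.replicate k j) ⁻¹' (U ∩ Set.Ioi 0) := by
      rintro x ⟨hx, hxU⟩
      refine ⟨hx, ?_⟩
      rw [Set.mem_preimage, Fl_append, Fl_replicate]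
      exact ⟨hxU, h.Fl_pos (h.iterate_pos hx j k) _⟩
    have h1 : 0 < Q (Set.Ioi 0 ∩
        Fl π00 π01 π10 π11 ε ((i :: l) ++ List.replicate k j) ⁻¹' (U ∩ Set.Ioi 0)) :=
      lt_of_lt_of_le hk (measure_mono hsub2)
    have h2 : 0 < ENNReal.ofReal (Hyp.cR π00 π01 π10 π11 ε) ^ ((i :: l) ++ List.replicate k j).length
        * Q (Set.Ioi 0 ∩ Fl π00 π01 π10 π11 ε ((i :: l) ++ List.replicate k j) ⁻¹' (U ∩ Set.Ioi 0)) :=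
      ENNReal.mul_pos (pow_ne_zero _ (ENNReal.ofReal_pos.mpr h.cR_pos).ne') h1.ne'
    calc (0:ENNReal) < _ := h2
      _ ≤ Q (U ∩ Set.Ioi 0) := hword
      _ ≤ Q U := measure_mono Set.inter_subset_left
  have hsuppClosed : IsClosed (measSupp Q) := by
    rw [← isOpen_compl_iff, isOpen_iff_forall_mem_open]
    intro x hx
    simp only [Set.mem_compl_iff, measSupp, Set.mem_setOf_eq] at hx
    push_neg at hx
    obtain ⟨U, hUo, hxU, hQU⟩ := hx
    refine ⟨U, ?_, hUo, hxU⟩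
    intro y hy hmem
    exact absurd (hmem U hUo hy) (not_lt.mpr hQU)
  have dir1 : closure (setL π00 π01 π10 π11 ε p₀ p₁) ⊆ measSupp Q :=
    closure_minimal hLsupp hsuppClosed
  -- Direction 2 : measSupp Q ⊆ closure L
  have hA'comp : IsCompact (Real.log '' closure (setL π00 π01 π10 π11 ε p₀ p₁)) :=
    hAcomp.image_of_continuousOn
      (fun x hx => (Real.continuousAt_log (ne_of_gt (hApos hx))).continuousWithinAt)
  have hA'cl : IsClosed (Real.log '' closure (setL π00 π01 π10 π11 ε p₀ p₁)) := hA'comp.isClosed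
  have hA'ne : (Real.log '' closure (setL π00 π01 π10 π11 ε p₀ p₁)).Nonempty := hAne.image _
  set D : ℝ → ℝ := fun x =>
    Metric.infDist (Real.log x) (Real.log '' closure (setL π00 π01 π10 π11 ε p₀ p₁)) with hD
  have hDmeas : Measurable D :=
    (Metric.continuous_infDist_pt _).measurable.comp Real.measurable_log
  have hDnonneg : ∀ x, 0 ≤ D x := fun x => Metric.infDist_nonneg
  have hφmeas : Measurable (fun x => ENNReal.ofReal (D x)) := hDmeas.ennreal_ofReal
  have hstep : ∀ (i : Bool) (x : ℝ), 0 < x →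
      D (fb π00 π01 π10 π11 ε i x) ≤ sC π00 π01 π10 π11 * D x := by
    intro i x hx
    obtain ⟨a', ha'mem, ha'dist⟩ := hA'comp.exists_infDist_eq_dist hA'ne (Real.log x)
    obtain ⟨a, haA, rfl⟩ := ha'mem
    have hapos : 0 < a := hApos haA
    have hmem1 : Real.log (fb π00 π01 π10 π11 ε i a)
        ∈ Real.log '' closure (setL π00 π01 π10 π11 ε p₀ p₁) := ⟨_, hfbA i a haA, rfl⟩
    calc D (fb π00 π01 π10 π11 ε i x)
        ≤ dist (Real.log (fb π00 π01 π10 π11 ε i x)) (Real.log (fb π00 π01 π10 π11 ε i a)) :=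
          Metric.infDist_le_dist_of_mem hmem1
      _ ≤ sC π00 π01 π10 π11 * |Real.log x - Real.log a| := by
          rw [Real.dist_eq]; exact h.fb_contract hx hapos i
      _ = sC π00 π01 π10 π11 * D x := by
          have hDx : D x = |Real.log x - Real.log a| := ha'dist.trans (Real.dist_eq _ _)
          rw [hDx]
  have hIoiIcc : (Set.Ioi (0:ℝ))
      =ᵐ[Q] Set.Icc (mLo π00 π01 π10 π11 ε) (mHi π00 π01 π10 π11 ε) := by
    rw [MeasureTheory.ae_eq_set]
    constructor
    · apply measure_mono_null (t := (Set.Icc (mLo π00 π01 π10 π11 ε) (mHi π00 π01 π10 π11 ε))ᶜ)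
      · exact fun x hx => hx.2
      · rw [prob_compl_eq_one_sub measurableSet_Icc, Q_Icc_one h Q hQpos hQinv, tsub_self]
    · have hempty : Set.Icc (mLo π00 π01 π10 π11 ε) (mHi π00 π01 π10 π11 ε) \ Set.Ioi 0 = ∅ := by
        ext x
        simp only [Set.mem_diff, Set.mem_Icc, Set.mem_Ioi, Set.mem_empty_iff_false, iff_false,
          not_and, not_not, not_lt]
        intro hx hx2
        exact absurd (lt_of_lt_of_le h.mLo_pos hx.1) (not_lt.mpr hx2)
      rw [hempty, measure_empty]
  have hp0A' : Real.log p₀ ∈ Real.log '' closure (setL π00 π01 π10 π11 ε p₀ p₁) :=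
    ⟨p₀, subset_closure hp0L, rfl⟩
  have hΦfin : (∫⁻ x in Set.Ioi 0, ENNReal.ofReal (D x) ∂Q) < ⊤ := by
    have hbound : ∀ x ∈ Set.Icc (mLo π00 π01 π10 π11 ε) (mHi π00 π01 π10 π11 ε),
        D x ≤ |Real.log (mLo π00 π01 π10 π11 ε)| + |Real.log (mHi π00 π01 π10 π11 ε)|
          + |Real.log p₀| := by
      intro x hx
      have hxpos : 0 < x := lt_of_lt_of_le h.mLo_pos hx.1
      have hlog1 : Real.log (mLo π00 π01 π10 π11 ε) ≤ Real.log x :=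
        Real.log_le_log h.mLo_pos hx.1
      have hlog2 : Real.log x ≤ Real.log (mHi π00 π01 π10 π11 ε) :=
        Real.log_le_log hxpos hx.2
      have habs : |Real.log x| ≤ |Real.log (mLo π00 π01 π10 π11 ε)|
          + |Real.log (mHi π00 π01 π10 π11 ε)| := by
        rw [abs_le]
        constructor
        · have := neg_abs_le (Real.log (mLo π00 π01 π10 π11 ε))
          have := abs_nonneg (Real.log (mHi π00 π01 π10 π11 ε))
          linarith
        · have := le_abs_self (Real.log (mHi π00 π01 π10 π11 ε))
          have := abs_nonneg (Real.log (mLo π00 π01 π10 π11 ε))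
          linarith
      calc D x ≤ dist (Real.log x) (Real.log p₀) := Metric.infDist_le_dist_of_mem hp0A'
        _ = |Real.log x - Real.log p₀| := Real.dist_eq _ _
        _ ≤ |Real.log x| + |Real.log p₀| := by
            have := abs_add_le (Real.log x) (-Real.log p₀)
            simpa [sub_eq_add_neg] using this
        _ ≤ _ := by linarith
    calc (∫⁻ x in Set.Ioi 0, ENNReal.ofReal (D x) ∂Q)
        = ∫⁻ x in Set.Icc (mLo π00 π01 π10 π11 ε) (mHi π00 π01 π10 π11 ε),
            ENNReal.ofReal (D x) ∂Q := by rw [Measure.restrict_congr_set hIoiIcc]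
      _ ≤ ∫⁻ _ in Set.Icc (mLo π00 π01 π10 π11 ε) (mHi π00 π01 π10 π11 ε),
            ENNReal.ofReal (|Real.log (mLo π00 π01 π10 π11 ε)|
              + |Real.log (mHi π00 π01 π10 π11 ε)| + |Real.log p₀|) ∂Q :=
          setLIntegral_mono measurable_const
            (fun x hx => ENNReal.ofReal_le_ofReal (hbound x hx))
      _ = ENNReal.ofReal (|Real.log (mLo π00 π01 π10 π11 ε)|
            + |Real.log (mHi π00 π01 π10 π11 ε)| + |Real.log p₀|)
          * Q (Set.Icc (mLo π00 π01 π10 π11 ε) (mHi π00 π01 π10 π11 ε)) := setLIntegral_const _ _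
      _ < ⊤ := ENNReal.mul_lt_top ENNReal.ofReal_lt_top (measure_lt_top Q _)
  have hcontr : (∫⁻ x in Set.Ioi 0, ENNReal.ofReal (D x) ∂Q)
      ≤ ENNReal.ofReal (sC π00 π01 π10 π11) * ∫⁻ x in Set.Ioi 0, ENNReal.ofReal (D x) ∂Q := by
    have htrans' : (∫⁻ x in Set.Ioi 0, ENNReal.ofReal (D x) ∂Q)
        = (∫⁻ x in Set.Ioi 0, ENNReal.ofReal (r₀ π00 π01 π10 π11 ε x)
            * ENNReal.ofReal (D (f₀ π00 π01 π10 π11 ε x)) ∂Q)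
          + ∫⁻ x in Set.Ioi 0, ENNReal.ofReal (r₁ π00 π01 π10 π11 ε x)
            * ENNReal.ofReal (D (f₁ π00 π01 π10 π11 ε x)) ∂Q :=
      transfer h Q hQpos hQinv (fun x => ENNReal.ofReal (D x)) hφmeas
    have hterm : ∀ (f : ℝ → ℝ) (i : Bool), (∀ x : ℝ, f x = fb π00 π01 π10 π11 ε i x) →
        ∀ (w : ℝ → ℝ), Measurable w →
        (∫⁻ x in Set.Ioi 0, ENNReal.ofReal (w x) * ENNReal.ofReal (D (f x)) ∂Q)
          ≤ ∫⁻ x in Set.Ioi 0, ENNReal.ofReal (w x)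
              * (ENNReal.ofReal (sC π00 π01 π10 π11) * ENNReal.ofReal (D x)) ∂Q := by
      intro f i hfi w hw
      apply setLIntegral_mono (hw.ennreal_ofReal.mul (measurable_const.mul hφmeas))
      intro x hx
      apply mul_le_mul_right
      show _ ≤ ENNReal.ofReal (sC π00 π01 π10 π11) * ENNReal.ofReal (D x)
      rw [← ENNReal.ofReal_mul (le_of_lt h.sC_pos)]
      apply ENNReal.ofReal_le_ofReal
      rw [hfi]
      exact hstep i x hx
    calc (∫⁻ x in Set.Ioi 0, ENNReal.ofReal (D x) ∂Q)
        = (∫⁻ x in Set.Ioi 0, ENNReal.ofReal (r₀ π00 π01 π10 π11 ε x)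
            * ENNReal.ofReal (D (f₀ π00 π01 π10 π11 ε x)) ∂Q)
          + ∫⁻ x in Set.Ioi 0, ENNReal.ofReal (r₁ π00 π01 π10 π11 ε x)
            * ENNReal.ofReal (D (f₁ π00 π01 π10 π11 ε x)) ∂Q := htrans'
      _ ≤ (∫⁻ x in Set.Ioi 0, ENNReal.ofReal (r₀ π00 π01 π10 π11 ε x)
            * (ENNReal.ofReal (sC π00 π01 π10 π11) * ENNReal.ofReal (D x)) ∂Q)
          + ∫⁻ x in Set.Ioi 0, ENNReal.ofReal (r₁ π00 π01 π10 π11 ε x)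
            * (ENNReal.ofReal (sC π00 π01 π10 π11) * ENNReal.ofReal (D x)) ∂Q :=
          add_le_add
            (hterm _ false (fun x => by rw [fb_false]) _ (r₀_measurable π00 π01 π10 π11 ε))
            (hterm _ true (fun x => by rw [fb_true]) _ (r₁_measurable π00 π01 π10 π11 ε))
      _ = ∫⁻ x in Set.Ioi 0, (ENNReal.ofReal (r₀ π00 π01 π10 π11 ε x)
            * (ENNReal.ofReal (sC π00 π01 π10 π11) * ENNReal.ofReal (D x))
          + ENNReal.ofReal (r₁ π00 π01 π10 π11 ε x)
            * (ENNReal.ofReal (sC π00 π01 π10 π11) * ENNReal.ofReal (D x))) ∂Q := by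
          rw [lintegral_add_left (f := fun x => ENNReal.ofReal (r₀ π00 π01 π10 π11 ε x)
              * (ENNReal.ofReal (sC π00 π01 π10 π11) * ENNReal.ofReal (D x))) ((r₀_measurable π00 π01 π10 π11 ε).ennreal_ofReal.mul
            (measurable_const.mul hφmeas))]
      _ = ∫⁻ x in Set.Ioi 0, ENNReal.ofReal (sC π00 π01 π10 π11) * ENNReal.ofReal (D x) ∂Q := by
          apply setLIntegral_congr_fun measurableSet_Ioi
          intro x hx
          dsimp only
          rw [← add_mul, ← ENNReal.ofReal_add (le_of_lt (h.r₀_pos hx)) (le_of_lt (h.r₁_pos hx)),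
            h.r_sum hx]
          simp
      _ = ENNReal.ofReal (sC π00 π01 π10 π11) * ∫⁻ x in Set.Ioi 0, ENNReal.ofReal (D x) ∂Q :=
          lintegral_const_mul _ hφmeas
  have hΦ0 : (∫⁻ x in Set.Ioi 0, ENNReal.ofReal (D x) ∂Q) = 0 := by
    by_contra hne
    have hlt : ENNReal.ofReal (sC π00 π01 π10 π11)
        * (∫⁻ x in Set.Ioi 0, ENNReal.ofReal (D x) ∂Q)
        < 1 * ∫⁻ x in Set.Ioi 0, ENNReal.ofReal (D x) ∂Q :=
      (ENNReal.mul_lt_mul_iff_left hne hΦfin.ne).mpr (ENNReal.ofReal_lt_one.mpr h.sC_lt_one)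
    rw [one_mul] at hlt
    exact absurd (lt_of_le_of_lt hcontr hlt) (lt_irrefl _)
  have hae0 : (fun x => ENNReal.ofReal (D x)) =ᵐ[Q.restrict (Set.Ioi 0)] 0 :=
    (lintegral_eq_zero_iff hφmeas).mp hΦ0
  have hN : Q ({x : ℝ | D x ≠ 0} ∩ Set.Ioi 0) = 0 := by
    have h1 := hae0
    rw [Filter.EventuallyEq, ae_iff] at h1
    have hmeasN : MeasurableSet {x : ℝ | ¬ ENNReal.ofReal (D x) = (0 : ℝ → ENNReal) x} := by
      simp only [Pi.zero_apply]
      exact (hφmeas (measurableSet_singleton 0)).compl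
    rw [Measure.restrict_apply hmeasN] at h1
    have hseteq : {x : ℝ | ¬ ENNReal.ofReal (D x) = (0 : ℝ → ENNReal) x} ∩ Set.Ioi 0
        = {x : ℝ | D x ≠ 0} ∩ Set.Ioi 0 := by
      ext x
      simp only [Set.mem_inter_iff, Set.mem_setOf_eq, Pi.zero_apply, ENNReal.ofReal_eq_zero,
        not_le, Set.mem_Ioi, ne_eq]
      constructor
      · rintro ⟨hlt, hx⟩
        exact ⟨ne_of_gt hlt, hx⟩
      · rintro ⟨hne, hx⟩
        exact ⟨lt_of_le_of_ne (hDnonneg x) (Ne.symm hne), hx⟩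
    rw [hseteq] at h1
    exact h1
  have hQA : Q (closure (setL π00 π01 π10 π11 ε p₀ p₁)) = 1 := by
    have hsub : Set.Ioi (0:ℝ) ⊆ closure (setL π00 π01 π10 π11 ε p₀ p₁)
        ∪ ({x : ℝ | D x ≠ 0} ∩ Set.Ioi 0) := by
      intro x hx
      by_cases hzero : D x = 0
      · left
        have hlogmem : Real.log x ∈ Real.log '' closure (setL π00 π01 π10 π11 ε p₀ p₁) :=
          (hA'cl.mem_iff_infDist_zero hA'ne).mpr hzero
        obtain ⟨a, haA, hlog⟩ := hlogmem
        have hxa : x = a := by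
          rw [← Real.exp_log hx, ← Real.exp_log (hApos haA), hlog]
        rwa [hxa]
      · right; exact ⟨hzero, hx⟩
    have h1 : (1:ENNReal) ≤ Q (closure (setL π00 π01 π10 π11 ε p₀ p₁)) := by
      calc (1:ENNReal) = Q (Set.Ioi 0) := hQpos.symm
        _ ≤ Q (closure (setL π00 π01 π10 π11 ε p₀ p₁) ∪ ({x : ℝ | D x ≠ 0} ∩ Set.Ioi 0)) :=
            measure_mono hsub
        _ ≤ Q (closure (setL π00 π01 π10 π11 ε p₀ p₁)) + Q ({x : ℝ | D x ≠ 0} ∩ Set.Ioi 0) :=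
            measure_union_le _ _
        _ = Q (closure (setL π00 π01 π10 π11 ε p₀ p₁)) := by rw [hN, add_zero]
    exact le_antisymm prob_le_one h1
  have dir2 : measSupp Q ⊆ closure (setL π00 π01 π10 π11 ε p₀ p₁) := by
    intro x hx
    by_contra hxA
    have h0 : Q (closure (setL π00 π01 π10 π11 ε p₀ p₁))ᶜ = 0 := by
      rw [prob_compl_eq_one_sub isClosed_closure.measurableSet, hQA, tsub_self]
    have := hx _ isClosed_closure.isOpen_compl hxA
    rw [h0] at this
    exact lt_irrefl _ this
  exact Set.Subset.antisymm dir2 dir1
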